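/- arXiv:1201.5792 — 2 statements merged into one kernel-verified Lean document; each statement's English description precedes it below -/
import Mathlib

section
/- Let K be a field with primitive k-th root of unity ξ_k, and σ_τ ∈ Aut(K[x₁,…,xₙ]) the diagonal automorphism σ_τ(xᵢ) = ξ_k^{νᵢ}xᵢ. Fix a monomial ordering. For nonzero polynomials f, g ∈ K[x₁,…,xₙ], let spoly(f,g) = X^{γ−α}·f − (LC(f)/LC(g))·X^{γ−β}·g, where X^α = LM(f), X^β = LM(g), X^γ = lcm(X^α, X^β). Then σ_τ(spoly(f,g)) = ξ_k^{ν_γ − ν_α} · spoly(σ_τ(f), σ_τ(g)), where ξ_k^{ν_α}, ξ_k^{ν_γ} are the eigenvalues of σ_τ on X^α and X^γ respectively. -/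
open MvPolynomial

/-- The leading exponent of `f` with respect to a monomial order `m`. -/
noncomputable def MonomialOrder.mDegree {σ : Type*} (m : MonomialOrder σ) {R : Type*}
    [CommSemiring R] (f : MvPolynomial σ R) : σ →₀ ℕ :=
  m.toSyn.symm (f.support.sup fun α => m.toSyn α)

/-- The leading coefficient of `f` with respect to a monomial order `m`. -/
noncomputable def MonomialOrder.mLeadingCoeff {σ : Type*} (m : MonomialOrder σ) {R : Type*}
    [CommSemiring R] (f : MvPolynomial σ R) : R :=
  f.coeff (m.mDegree f)

/-- Buchberger's S-polynomial with respect to a monomial order `m`. -/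
noncomputable def MonomialOrder.spoly {σ : Type*} (m : MonomialOrder σ) {K : Type*}
    [Field K] (f g : MvPolynomial σ K) : MvPolynomial σ K :=
  monomial (m.mDegree f ⊔ m.mDegree g - m.mDegree f) (1 : K) * f -
    C (m.mLeadingCoeff f / m.mLeadingCoeff g) *
      (monomial (m.mDegree f ⊔ m.mDegree g - m.mDegree g) (1 : K) * g)

/-- For a diagonal automorphism `σ_τ(xᵢ) = ξ^{νᵢ}xᵢ` of `K[x₁,…,xₙ]`, one has
`σ_τ(spoly(f,g)) = ξ^{ν_γ − ν_α} · spoly(σ_τ(f), σ_τ(g))`, where `ξ^{ν_α}`, `ξ^{ν_γ}`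
are the eigenvalues of `σ_τ` on `LM(f)` and `lcm(LM(f), LM(g))` respectively. -/
theorem diagonal_automorphism_spoly (n k : ℕ) (K : Type*) [Field K]
    (ξ : K) (hξ : IsPrimitiveRoot ξ k) (ν : Fin n → ℕ)
    (φ : MvPolynomial (Fin n) K ≃ₐ[K] MvPolynomial (Fin n) K)
    (hφ : ∀ i, φ (X i) = (ξ ^ ν i) • X i)
    (m : MonomialOrder (Fin n))
    (f g : MvPolynomial (Fin n) K) (hf : f ≠ 0) (hg : g ≠ 0) :
    φ (m.spoly f g) =
      (ξ ^ (∑ i, ν i * (m.mDegree f ⊔ m.mDegree g) i) / ξ ^ (∑ i, ν i * m.mDegree f i)) •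
        m.spoly (φ f) (φ g) := by
  set c : (Fin n →₀ ℕ) → K := fun δ => ξ ^ (∑ i, ν i * δ i) with hc
  -- each eigenvalue is nonzero
  have hXne : ∀ i : Fin n, (ξ ^ ν i : K) ≠ 0 := by
    intro i h
    have : φ (X i) = 0 := by rw [hφ i, h, zero_smul]
    exact X_ne_zero (R := K) i (φ.injective (by simpa using this))
  have hcprod : ∀ δ : Fin n →₀ ℕ, c δ = ∏ i, (ξ ^ ν i) ^ δ i := by
    intro δ
    rw [hc]
    simp_rw [← pow_mul]
    exact (Finset.prod_pow_eq_pow_sum _ _ _).symm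
  have hcne : ∀ δ, c δ ≠ 0 := by
    intro δ
    rw [hcprod]
    exact Finset.prod_ne_zero_iff.2 fun i _ => pow_ne_zero _ (hXne i)
  have hcadd : ∀ δ ε, c (δ + ε) = c δ * c ε := by
    intro δ ε
    simp only [hc, Finsupp.add_apply, Nat.mul_add, Finset.sum_add_distrib, pow_add]
  -- action on monomials
  have hmono : ∀ (δ : Fin n →₀ ℕ) (a : K), φ (monomial δ a) = c δ • monomial δ a := by
    intro δ a
    rw [monomial_eq, map_mul, show φ (C a) = C a from φ.commutes a, map_finsuppProd]
    simp_rw [map_pow, hφ, smul_pow, ← pow_mul, smul_eq_C_mul]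
    rw [Finsupp.prod, Finset.prod_mul_distrib, ← map_prod]
    have h1 : c δ = ∏ x ∈ δ.support, ξ ^ (ν x * δ x) := by
      rw [hcprod]
      simp_rw [← pow_mul]
      exact (Finset.prod_subset (Finset.subset_univ _)
        (fun i _ hi => by simp [Finsupp.notMem_support_iff.1 hi])).symm
    rw [h1, Finsupp.prod]
    ring
  -- coefficients of φ p
  have hcoeff : ∀ (p : MvPolynomial (Fin n) K) (δ : Fin n →₀ ℕ),
      coeff δ (φ p) = c δ * coeff δ p := by
    intro p δ
    conv_lhs => rw [p.as_sum]
    rw [map_sum]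
    simp_rw [hmono, coeff_sum, coeff_smul, coeff_monomial, smul_eq_mul, mul_ite, mul_zero]
    rw [Finset.sum_ite_eq' p.support δ fun v => c v * coeff v p]
    by_cases h : δ ∈ p.support
    · simp [h]
    · have h0 : coeff δ p = 0 := by simpa [mem_support_iff] using h
      simp [h, h0]
  have hsupp : ∀ p : MvPolynomial (Fin n) K, (φ p).support = p.support := by
    intro p
    ext δ
    simp [mem_support_iff, hcoeff, hcne δ]
  have hdeg : ∀ p : MvPolynomial (Fin n) K, m.mDegree (φ p) = m.mDegree p := by
    intro p
    unfold MonomialOrder.mDegree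
    rw [hsupp]
  have hlc : ∀ p : MvPolynomial (Fin n) K,
      m.mLeadingCoeff (φ p) = c (m.mDegree p) * m.mLeadingCoeff p := by
    intro p
    unfold MonomialOrder.mLeadingCoeff
    rw [hdeg, hcoeff]
  -- leading coefficients nonzero
  have hlcne : ∀ p : MvPolynomial (Fin n) K, p ≠ 0 → m.mLeadingCoeff p ≠ 0 := by
    intro p hp
    have hne : p.support.Nonempty := Finset.nonempty_iff_ne_empty.2 (mt MvPolynomial.support_eq_empty.1 hp)
    obtain ⟨b, hb, hbeq⟩ := Finset.exists_mem_eq_sup p.support hne fun α => m.toSyn α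
    have : m.mDegree p = b := by
      unfold MonomialOrder.mDegree
      rw [hbeq]; exact m.toSyn.symm_apply_apply b
    unfold MonomialOrder.mLeadingCoeff
    rw [this]
    exact mem_support_iff.1 hb
  set α := m.mDegree f with hα
  set β := m.mDegree g with hβ
  set γ := α ⊔ β with hγ
  have hγα : γ - α + α = γ := tsub_add_cancel_of_le le_sup_left
  have hγβ : γ - β + β = γ := tsub_add_cancel_of_le le_sup_right
  have hca : c (γ - α) * c α = c γ := by rw [← hcadd, hγα]
  have hcb : c (γ - β) * c β = c γ := by rw [← hcadd, hγβ]
  have key : (ξ ^ (∑ i, ν i * γ i) / ξ ^ (∑ i, ν i * α i)) = c γ / c α := rfl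
  rw [key]
  unfold MonomialOrder.spoly
  rw [hdeg f, hdeg g, hlc f, hlc g, ← hα, ← hβ, ← hγ]
  rw [map_sub, map_mul, map_mul, map_mul, hmono, hmono,
    show φ (C (m.mLeadingCoeff f / m.mLeadingCoeff g)) = C (m.mLeadingCoeff f / m.mLeadingCoeff g)
      from φ.commutes _]
  simp only [smul_eq_C_mul, smul_sub, smul_mul_assoc, ← C_mul, map_div₀]
  have e1 : c (γ - α) = c γ / c α := by
    field_simp [hcne α]; linear_combination hca
  have e2 : (m.mLeadingCoeff f / m.mLeadingCoeff g) * c (γ - β) =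
      c γ / c α * (c α * m.mLeadingCoeff f / (c β * m.mLeadingCoeff g)) := by
    rw [← hcb]
    field_simp [hcne α, hcne β, hlcne g hg]
  congr 1
  · rw [e1, mul_assoc]
  · simp only [← mul_assoc, ← C_mul]
    rw [e2]
end

section
/- Let K be a field with primitive k-th root of unity ξ_k, σ_τ ∈ Aut(K[x₁,…,xₙ]) a diagonal automorphism σ_τ(xᵢ) = ξ_k^{νᵢ}xᵢ, and I a σ_τ-symmetric ideal. If f ∈ I is an eigenvector of σ_τ with σ_τ(f) = ξ_k^{a} f, and g ∈ I with σ_τ(g) = ξ_k^{b} g, then spoly(f,g) is also an eigenvector of σ_τ; more generally, the K-linear span of σ_τ-eigenvectors in I is closed under taking S-polynomials of eigenvector pairs. -/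
open MvPolynomial

lemma aux_wt_add (n : ℕ) (ν : Fin n → ℕ) (s t : Fin n →₀ ℕ) :
    ((s + t).sum fun i e => ν i * e) = (s.sum fun i e => ν i * e) + (t.sum fun i e => ν i * e) :=
  Finsupp.sum_add_index' (fun _ => mul_zero _) (fun _ b c => mul_add _ _ _)

lemma aux_phi_monomial (n : ℕ) (K : Type*) [Field K] (ξ : K) (ν : Fin n → ℕ)
    (φ : MvPolynomial (Fin n) K ≃ₐ[K] MvPolynomial (Fin n) K)
    (hφ : ∀ i, φ (X i) = (ξ ^ ν i) • X i) (α : Fin n →₀ ℕ) (c : K) :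
    φ (monomial α c) = (ξ ^ (α.sum fun i e => ν i * e)) • monomial α c := by
  have key : ∀ α : Fin n →₀ ℕ, φ (monomial α 1) = (ξ ^ (α.sum fun i e => ν i * e)) • monomial α 1 := by
    intro α
    induction α using Finsupp.induction with
    | zero => simp [monomial_zero']
    | single_add i e s hi he ih =>
      rw [add_comm, ← one_mul (1 : K), ← monomial_mul, map_mul, ih, ← X_pow_eq_monomial,
        map_pow, hφ, smul_pow, ← pow_mul, smul_mul_smul_comm, X_pow_eq_monomial, monomial_mul,
        one_mul, ← pow_add, add_comm s]
      congr 1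
      rw [aux_wt_add]; simp [Finsupp.sum_single_index, add_comm]
  have h1 : monomial α c = c • monomial α 1 := by rw [smul_monomial, smul_eq_mul, mul_one]
  rw [h1, map_smul, key, smul_comm]

lemma aux_eigen_coeff (n : ℕ) (K : Type*) [Field K] (ξ : K) (ν : Fin n → ℕ)
    (φ : MvPolynomial (Fin n) K ≃ₐ[K] MvPolynomial (Fin n) K)
    (hφ : ∀ i, φ (X i) = (ξ ^ ν i) • X i) (f : MvPolynomial (Fin n) K) (a : ℕ)
    (hfeig : φ f = (ξ ^ a) • f) (α : Fin n →₀ ℕ) (hα : α ∈ f.support) :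
    ξ ^ (α.sum fun i e => ν i * e) = ξ ^ a := by
  have hsum : φ f = ∑ β ∈ f.support, (ξ ^ (β.sum fun i e => ν i * e)) • monomial β (f.coeff β) := by
    conv_lhs => rw [f.as_sum, map_sum]
    exact Finset.sum_congr rfl fun β _ => aux_phi_monomial n K ξ ν φ hφ β _
  have h1 : (φ f).coeff α = ξ ^ (α.sum fun i e => ν i * e) * f.coeff α := by
    rw [hsum, coeff_sum]
    rw [Finset.sum_eq_single α]
    · simp
    · intro β _ hβ; simp [coeff_monomial, hβ]
    · intro h; exact absurd hα h
  have h2 : (φ f).coeff α = ξ ^ a * f.coeff α := by rw [hfeig, coeff_smul]; rfl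
  have hc : f.coeff α ≠ 0 := mem_support_iff.mp hα
  exact mul_right_cancel₀ hc (h1.symm.trans h2)

lemma aux_mDegree_mem_support {σ : Type*} (m : MonomialOrder σ) {K : Type*} [Field K]
    (f : MvPolynomial σ K) (hf : f ≠ 0) : m.mDegree f ∈ f.support := by
  obtain ⟨α, hα, h⟩ := Finset.exists_mem_eq_sup f.support (support_nonempty.mpr hf)
    (fun α => m.toSyn α)
  rw [MonomialOrder.mDegree, h]; simpa using hα

/-- If `I` is symmetric under a diagonal automorphism `σ_τ(xᵢ) = ξ^{νᵢ}xᵢ` and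
`f, g ∈ I` are eigenvectors of `σ_τ` with eigenvalues `ξ^a`, `ξ^b`, then `spoly(f,g)`
is again an eigenvector of `σ_τ`; in particular it lies in the `K`-linear span of the
`σ_τ`-eigenvectors contained in `I`. -/
theorem spoly_of_eigenvectors_is_eigenvector (n k : ℕ) (K : Type*) [Field K]
    (ξ : K) (hξ : IsPrimitiveRoot ξ k) (ν : Fin n → ℕ)
    (φ : MvPolynomial (Fin n) K ≃ₐ[K] MvPolynomial (Fin n) K)
    (hφ : ∀ i, φ (X i) = (ξ ^ ν i) • X i)
    (m : MonomialOrder (Fin n))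
    (I : Ideal (MvPolynomial (Fin n) K))
    (hsym : Ideal.map φ.toAlgHom.toRingHom I = I)
    (f g : MvPolynomial (Fin n) K) (hf : f ∈ I) (hg : g ∈ I)
    (hf0 : f ≠ 0) (hg0 : g ≠ 0) (a b : ℕ)
    (hfeig : φ f = (ξ ^ a) • f) (hgeig : φ g = (ξ ^ b) • g) :
    (∃ e : ℕ, φ (m.spoly f g) = (ξ ^ e) • m.spoly f g) ∧
      m.spoly f g ∈ Submodule.span K
        {h : MvPolynomial (Fin n) K | h ∈ I ∧ ∃ c : K, φ h = c • h} := by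
  set wt : (Fin n →₀ ℕ) → ℕ := fun α => α.sum fun i e => ν i * e with hwt
  set α := m.mDegree f
  set β := m.mDegree g
  set γ := α ⊔ β with hγ
  set c := m.mLeadingCoeff f / m.mLeadingCoeff g
  have e1 : ξ ^ wt α = ξ ^ a :=
    aux_eigen_coeff n K ξ ν φ hφ f a hfeig α (aux_mDegree_mem_support m f hf0)
  have e2 : ξ ^ wt β = ξ ^ b :=
    aux_eigen_coeff n K ξ ν φ hφ g b hgeig β (aux_mDegree_mem_support m g hg0)
  have hδ1 : (γ - α) + α = γ := tsub_add_cancel_of_le le_sup_left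
  have hδ2 : (γ - β) + β = γ := tsub_add_cancel_of_le le_sup_right
  have key1 : ξ ^ wt (γ - α) * ξ ^ a = ξ ^ wt γ := by
    rw [← e1, ← pow_add, ← aux_wt_add, hδ1]
  have key2 : ξ ^ wt (γ - β) * ξ ^ b = ξ ^ wt γ := by
    rw [← e2, ← pow_add, ← aux_wt_add, hδ2]
  have hspoly : m.spoly f g = monomial (γ - α) (1 : K) * f - c • (monomial (γ - β) (1 : K) * g) := by
    rw [MonomialOrder.spoly, smul_eq_C_mul]
  have hmain : φ (m.spoly f g) = (ξ ^ wt γ) • m.spoly f g := by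
    rw [hspoly, map_sub, map_mul, map_smul, map_mul,
      aux_phi_monomial n K ξ ν φ hφ (γ - α) 1, aux_phi_monomial n K ξ ν φ hφ (γ - β) 1,
      hfeig, hgeig, smul_mul_smul_comm, smul_mul_smul_comm, key1, key2,
      smul_comm c, ← smul_sub]
  have hmem : m.spoly f g ∈ I := by
    rw [MonomialOrder.spoly]
    exact sub_mem (Ideal.mul_mem_left _ _ hf)
      (Ideal.mul_mem_left _ _ (Ideal.mul_mem_left _ _ hg))
  exact ⟨⟨wt γ, hmain⟩, Submodule.subset_span ⟨hmem, ξ ^ wt γ, hmain⟩⟩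
end
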